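/- Exponential finite model property for the one-variable fragment of QK with unbounded counting quantifiers: there exists a constant k ∈ ℕ such that for every one-variable first-order modal formula φ with counting quantifiers, if φ is satisfiable with respect to QK, then φ is satisfiable in a constant domain first-order Kripke model M = (W,R,D,d,I) with |W| ≤ 2^{(|φ|+2)^k} and |D| ≤ 2^{(|φ|+2)^k}. -/

import Mathlib

/-! Syntax of one-variable first-order modal formulas with counting quantifiers:
    φ ::= P(x) | ¬φ | (φ∧φ) | ◇φ | ∃[≤c]x φ. -/

inductive Fml : Type
  | atom : ℕ → Fml
  | neg : Fml → Fml
  | conj : Fml → Fml → Fml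
  | dia : Fml → Fml
  | countLe : ℕ → Fml → Fml
deriving DecidableEq

namespace Fml

/-- Subformulas. -/
def sub : Fml → Finset Fml
  | atom n => {atom n}
  | neg ψ => insert (neg ψ) ψ.sub
  | conj ψ χ => insert (conj ψ χ) (ψ.sub ∪ χ.sub)
  | dia ψ => insert (dia ψ) ψ.sub
  | countLe c ψ => insert (countLe c ψ) ψ.sub

/-- Modal depth. -/
def md : Fml → ℕ
  | atom _ => 0
  | neg ψ => ψ.md
  | conj ψ χ => max ψ.md χ.md
  | dia ψ => ψ.md + 1
  | countLe _ ψ => ψ.md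

/-- Capacity: the largest counting-quantifier subscript (0 if none). -/
def cpt : Fml → ℕ
  | atom _ => 0
  | neg ψ => ψ.cpt
  | conj ψ χ => max ψ.cpt χ.cpt
  | dia ψ => ψ.cpt
  | countLe c ψ => max c ψ.cpt

/-- Length of the formula as a string, counting subscripts written in binary. -/
def len : Fml → ℕ
  | atom _ => 1
  | neg ψ => ψ.len + 1
  | conj ψ χ => ψ.len + χ.len + 1
  | dia ψ => ψ.len + 1
  | countLe c ψ => ψ.len + Nat.size c + 1

/-- Predicate symbols occurring in a formula. -/
def preds : Fml → Finset ℕ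
  | atom n => {n}
  | neg ψ => ψ.preds
  | conj ψ χ => ψ.preds ∪ χ.preds
  | dia ψ => ψ.preds
  | countLe _ ψ => ψ.preds

def imp (ψ χ : Fml) : Fml := neg (conj ψ (neg χ))
def or (ψ χ : Fml) : Fml := neg (conj (neg ψ) (neg χ))
def iff (ψ χ : Fml) : Fml := conj (ψ.imp χ) (χ.imp ψ)
def box (ψ : Fml) : Fml := neg (dia (neg ψ))
/-- `∃x ψ := ¬∃[≤0]x ψ`. -/
def ex (ψ : Fml) : Fml := neg (countLe 0 ψ)
/-- `∀x ψ := ∃[≤0]x ¬ψ`. -/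
def fal (ψ : Fml) : Fml := countLe 0 (neg ψ)
/-- A tautology. -/
def top : Fml := neg (conj (atom 0) (neg (atom 0)))

/-- `boxIter n ψ` is `□^n ψ`. -/
def boxIter : ℕ → Fml → Fml
  | 0, ψ => ψ
  | n+1, ψ => (boxIter n ψ).box

/-- `boxLe m ψ` is `⋀_{k=0}^{m} □^k ψ`. -/
def boxLe : ℕ → Fml → Fml
  | 0, ψ => ψ
  | n+1, ψ => conj (boxLe n ψ) (boxIter (n+1) ψ)

end Fml

/-- A first-order Kripke model `M = (W,R,D,d,I)` (unary predicates suffice for the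
one-variable fragment). -/
structure KModel where
  W : Type
  R : W → W → Prop
  D : Type
  Dne : Nonempty D
  dom : W → Set D
  domNe : ∀ w, (dom w).Nonempty
  I : W → ℕ → Set D
  Isub : ∀ w p, I w p ⊆ dom w

/-- Satisfaction `M,w ⊨^a φ`. -/
def KModel.sat (M : KModel) : Fml → M.W → M.D → Prop
  | .atom p, w, a => a ∈ M.I w p
  | .neg ψ, w, a => ¬ M.sat ψ w a
  | .conj ψ χ, w, a => M.sat ψ w a ∧ M.sat χ w a
  | .dia ψ, w, a => ∃ v, M.R w v ∧ M.sat ψ v a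
  | .countLe c ψ, w, _ => {b | b ∈ M.dom w ∧ M.sat ψ w b}.encard ≤ (c : ℕ∞)

def KModel.constDom (M : KModel) : Prop := ∀ u v, M.dom u = M.dom v
def KModel.expDom (M : KModel) : Prop := ∀ u v, M.R u v → M.dom u ⊆ M.dom v
def KModel.decDom (M : KModel) : Prop := ∀ u v, M.R u v → M.dom v ⊆ M.dom u

/-- Satisfiability with respect to QK (constant domains). -/
def satQK (φ : Fml) : Prop :=
  ∃ M : KModel, M.constDom ∧ ∃ w a, a ∈ M.dom w ∧ M.sat φ w a

/-- Satisfiability with respect to QK^exp (expanding domains). -/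
def satQKexp (φ : Fml) : Prop :=
  ∃ M : KModel, M.expDom ∧ ∃ w a, a ∈ M.dom w ∧ M.sat φ w a

/-- Satisfiability with respect to QK^dec (decreasing domains). -/
def satQKdec (φ : Fml) : Prop :=
  ∃ M : KModel, M.decDom ∧ ∃ w a, a ∈ M.dom w ∧ M.sat φ w a

/-- `R` is the immediate-successor (parent–child) relation of a rooted irreflexive
intransitive tree of depth ≤ m with root `r`. -/
def IsTreeOfDepth {W : Type} (R : W → W → Prop) (r : W) (m : ℕ) : Prop :=
  ∃ depth : W → ℕ,
    depth r = 0 ∧ (∀ w, depth w ≤ m) ∧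
    (∀ u v, R u v → depth v = depth u + 1) ∧
    (∀ v, v ≠ r → ∃! u, R u v) ∧
    (∀ v, Relation.ReflTransGen R r v)

/-! ### Auxiliary machinery for the proof of stmt_4 -/

open scoped Classical

namespace Stmt4

open Fml Set

/-! #### Syntactic lemmas -/

lemma mem_sub_self (φ : Fml) : φ ∈ φ.sub := by
  cases φ <;> simp [Fml.sub]

lemma sub_subset_of_mem {φ ψ : Fml} (h : ψ ∈ φ.sub) : ψ.sub ⊆ φ.sub := by
  induction φ with
  | atom n => simp [Fml.sub] at h; subst h; simp [Fml.sub]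
  | neg χ ih =>
      simp only [Fml.sub, Finset.mem_insert] at h
      rcases h with rfl | h
      · exact Finset.Subset.refl _
      · exact (ih h).trans (Finset.subset_insert _ _)
  | conj χ₁ χ₂ ih₁ ih₂ =>
      simp only [Fml.sub, Finset.mem_insert, Finset.mem_union] at h
      rcases h with rfl | h | h
      · exact Finset.Subset.refl _
      · exact (ih₁ h).trans ((Finset.subset_union_left).trans (Finset.subset_insert _ _))
      · exact (ih₂ h).trans ((Finset.subset_union_right).trans (Finset.subset_insert _ _))
  | dia χ ih =>
      simp only [Fml.sub, Finset.mem_insert] at h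
      rcases h with rfl | h
      · exact Finset.Subset.refl _
      · exact (ih h).trans (Finset.subset_insert _ _)
  | countLe c χ ih =>
      simp only [Fml.sub, Finset.mem_insert] at h
      rcases h with rfl | h
      · exact Finset.Subset.refl _
      · exact (ih h).trans (Finset.subset_insert _ _)

lemma mem_sub_of_mem_sub {φ ψ χ : Fml} (h : ψ ∈ φ.sub) (h2 : χ ∈ ψ.sub) : χ ∈ φ.sub :=
  sub_subset_of_mem h h2

lemma neg_mem_sub {φ ψ : Fml} (h : Fml.neg ψ ∈ φ.sub) : ψ ∈ φ.sub :=
  mem_sub_of_mem_sub h (by simp [Fml.sub, mem_sub_self])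

lemma conj_mem_sub_left {φ ψ χ : Fml} (h : Fml.conj ψ χ ∈ φ.sub) : ψ ∈ φ.sub :=
  mem_sub_of_mem_sub h (by simp [Fml.sub]; right; left; exact mem_sub_self ψ)

lemma conj_mem_sub_right {φ ψ χ : Fml} (h : Fml.conj ψ χ ∈ φ.sub) : χ ∈ φ.sub :=
  mem_sub_of_mem_sub h (by simp [Fml.sub]; right; right; exact mem_sub_self χ)

lemma dia_mem_sub {φ ψ : Fml} (h : Fml.dia ψ ∈ φ.sub) : ψ ∈ φ.sub :=
  mem_sub_of_mem_sub h (by simp [Fml.sub, mem_sub_self])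

lemma countLe_mem_sub {φ ψ : Fml} {c : ℕ} (h : Fml.countLe c ψ ∈ φ.sub) : ψ ∈ φ.sub :=
  mem_sub_of_mem_sub h (by simp [Fml.sub, mem_sub_self])

lemma cpt_le_of_mem_sub {φ ψ : Fml} (h : ψ ∈ φ.sub) : ψ.cpt ≤ φ.cpt := by
  induction φ with
  | atom n => simp [Fml.sub] at h; subst h; exact le_refl _
  | neg χ ih =>
      simp only [Fml.sub, Finset.mem_insert] at h
      rcases h with rfl | h
      · exact le_refl _
      · exact ih h
  | conj χ₁ χ₂ ih₁ ih₂ =>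
      simp only [Fml.sub, Finset.mem_insert, Finset.mem_union] at h
      rcases h with rfl | h | h
      · exact le_refl _
      · exact (ih₁ h).trans (le_max_left _ _)
      · exact (ih₂ h).trans (le_max_right _ _)
  | dia χ ih =>
      simp only [Fml.sub, Finset.mem_insert] at h
      rcases h with rfl | h
      · exact le_refl _
      · exact ih h
  | countLe c χ ih =>
      simp only [Fml.sub, Finset.mem_insert] at h
      rcases h with rfl | h
      · exact le_refl _
      · exact (ih h).trans (le_max_right _ _) |>.trans (le_refl _)

lemma c_le_cpt_of_mem_sub {φ ψ : Fml} {c : ℕ} (h : Fml.countLe c ψ ∈ φ.sub) : c ≤ φ.cpt :=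
  le_trans (by simp [Fml.cpt]) (cpt_le_of_mem_sub h)

lemma len_pos (φ : Fml) : 1 ≤ φ.len := by
  induction φ <;> simp only [Fml.len] <;> omega

lemma card_sub_le_len (φ : Fml) : φ.sub.card ≤ φ.len := by
  induction φ with
  | atom n => simp [Fml.sub, Fml.len]
  | neg χ ih =>
      simp only [Fml.sub, Fml.len]
      calc (insert (χ.neg) χ.sub).card ≤ χ.sub.card + 1 := Finset.card_insert_le _ _
        _ ≤ χ.len + 1 := by omega
  | conj χ₁ χ₂ ih₁ ih₂ =>
      simp only [Fml.sub, Fml.len]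
      calc (insert (χ₁.conj χ₂) (χ₁.sub ∪ χ₂.sub)).card
          ≤ (χ₁.sub ∪ χ₂.sub).card + 1 := Finset.card_insert_le _ _
        _ ≤ χ₁.sub.card + χ₂.sub.card + 1 := by
            have := Finset.card_union_le χ₁.sub χ₂.sub; omega
        _ ≤ χ₁.len + χ₂.len + 1 := by omega
  | dia χ ih =>
      simp only [Fml.sub, Fml.len]
      calc (insert (χ.dia) χ.sub).card ≤ χ.sub.card + 1 := Finset.card_insert_le _ _
        _ ≤ χ.len + 1 := by omega
  | countLe c χ ih =>
      simp only [Fml.sub, Fml.len]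
      calc (insert (Fml.countLe c χ) χ.sub).card ≤ χ.sub.card + 1 := Finset.card_insert_le _ _
        _ ≤ χ.len + Nat.size c + 1 := by omega

lemma md_le_len (φ : Fml) : φ.md ≤ φ.len := by
  induction φ with
  | atom n => simp [Fml.md, Fml.len]
  | neg χ ih => simp [Fml.md, Fml.len]; omega
  | conj χ₁ χ₂ ih₁ ih₂ =>
      simp only [Fml.md, Fml.len, max_le_iff]
      constructor <;> omega
  | dia χ ih => simp [Fml.md, Fml.len]; omega
  | countLe c χ ih => simp [Fml.md, Fml.len]; omega

lemma cpt_lt_two_pow_len (φ : Fml) : φ.cpt < 2 ^ φ.len := by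
  induction φ with
  | atom n => simp [Fml.cpt, Fml.len]
  | neg χ ih =>
      simp only [Fml.cpt, Fml.len]
      exact lt_of_lt_of_le ih (Nat.pow_le_pow_right (by norm_num) (by omega))
  | conj χ₁ χ₂ ih₁ ih₂ =>
      simp only [Fml.cpt, Fml.len, max_lt_iff]
      constructor
      · exact lt_of_lt_of_le ih₁ (Nat.pow_le_pow_right (by norm_num) (by omega))
      · exact lt_of_lt_of_le ih₂ (Nat.pow_le_pow_right (by norm_num) (by omega))
  | dia χ ih =>
      simp only [Fml.cpt, Fml.len]
      exact lt_of_lt_of_le ih (Nat.pow_le_pow_right (by norm_num) (by omega))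
  | countLe c χ ih =>
      simp only [Fml.cpt, Fml.len, max_lt_iff]
      constructor
      · exact lt_of_lt_of_le (Nat.lt_size_self c)
          (Nat.pow_le_pow_right (by norm_num) (by omega))
      · exact lt_of_lt_of_le ih (Nat.pow_le_pow_right (by norm_num) (by omega))

end Stmt4
namespace Stmt4
open Set

variable {α β ι : Type*}

lemma exists_subset_encard_mem {s : Set α} {a : α} {k : ℕ} (hk : 1 ≤ k)
    (hks : (k : ℕ∞) ≤ s.encard) (ha : a ∈ s) :
    ∃ t, t ⊆ s ∧ a ∈ t ∧ t.encard = k := by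
  have hd : ((k - 1 : ℕ) : ℕ∞) ≤ (s \ {a}).encard := by
    have h1 : (s \ {a}).encard + 1 = s.encard := Set.encard_diff_singleton_add_one ha
    rcases eq_or_ne (s \ {a}).encard ⊤ with h | h
    · simp [h]
    · lift (s \ {a}).encard to ℕ using h with n hn
      rw [← h1] at hks
      have h2 : (k : ℕ∞) ≤ (n : ℕ∞) + 1 := hks
      have h3 : k ≤ n + 1 := by exact_mod_cast h2
      exact_mod_cast (by omega : k - 1 ≤ n)
  obtain ⟨t', ht's, ht'⟩ := Set.exists_subset_encard_eq hd
  refine ⟨insert a t', ?_, Set.mem_insert _ _, ?_⟩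
  · exact Set.insert_subset ha (ht's.trans Set.diff_subset)
  · have hat' : a ∉ t' := fun h => (ht's h).2 rfl
    rw [Set.encard_insert_of_notMem hat', ht']
    have : ((k - 1 : ℕ) : ℕ∞) + 1 = ((k - 1 + 1 : ℕ) : ℕ∞) := by norm_cast
    rw [this]
    congr 1
    omega

lemma exists_bijOn_of_encard_eq [Nonempty β] {s : Set α} {t : Set β}
    (h : s.encard = t.encard) (hs : s.Finite) :
    ∃ f : α → β, Set.BijOn f s t := by
  classical
  have ht : t.Finite := by
    rw [← Set.encard_ne_top_iff, ← h, Set.encard_ne_top_iff]; exact hs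
  haveI := hs.fintype
  haveI := ht.fintype
  have hcard : Fintype.card s = Fintype.card t := by
    rw [← Set.toFinset_card, ← Set.toFinset_card, ← Set.ncard_eq_toFinset_card',
      ← Set.ncard_eq_toFinset_card', Set.ncard_def, Set.ncard_def, h]
  let e : s ≃ t := Fintype.equivOfCardEq hcard
  refine ⟨fun x => if hx : x ∈ s then (e ⟨x, hx⟩ : β) else Classical.arbitrary β, ?_, ?_, ?_⟩
  · intro x hx
    simp only [dif_pos hx]
    exact (e ⟨x, hx⟩).2
  · intro x hx y hy hxy
    simp only [dif_pos hx, dif_pos hy] at hxy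
    have := e.injective (Subtype.ext hxy)
    exact congrArg Subtype.val this
  · intro y hy
    refine ⟨(e.symm ⟨y, hy⟩ : α), (e.symm ⟨y, hy⟩).2, ?_⟩
    simp only [dif_pos (e.symm ⟨y, hy⟩).2]
    have : e ⟨(e.symm ⟨y, hy⟩ : α), (e.symm ⟨y, hy⟩).2⟩ = ⟨y, hy⟩ := by
      rw [Subtype.coe_eta]
      exact e.apply_symm_apply _
    rw [this]

lemma swap_mem_of_mem {t : Set β} [DecidableEq β] {p q x : β} (hp : p ∈ t) (hq : q ∈ t)
    (hx : x ∈ t) : Equiv.swap p q x ∈ t := by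
  rcases eq_or_ne x p with rfl | h1
  · rwa [Equiv.swap_apply_left]
  rcases eq_or_ne x q with rfl | h2
  · rwa [Equiv.swap_apply_right]
  · rwa [Equiv.swap_apply_of_ne_of_ne h1 h2]

lemma exists_bijOn_of_encard_eq' [Nonempty β] {s : Set α} {t : Set β} {a : α} {b : β}
    (h : s.encard = t.encard) (hs : s.Finite) (has : a ∈ s) (hbt : b ∈ t) :
    ∃ f : α → β, Set.BijOn f s t ∧ f a = b := by
  classical
  obtain ⟨f, hf⟩ := exists_bijOn_of_encard_eq h hs
  refine ⟨fun x => Equiv.swap (f a) b (f x), ⟨?_, ?_, ?_⟩, by simp⟩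
  · intro x hx
    exact swap_mem_of_mem (hf.mapsTo has) hbt (hf.mapsTo hx)
  · intro x hx y hy hxy
    exact hf.injOn hx hy (Equiv.injective _ hxy)
  · intro y hy
    obtain ⟨x, hx, hfx⟩ := hf.surjOn (swap_mem_of_mem (hf.mapsTo has) hbt hy)
    exact ⟨x, hx, by simp only []; rw [hfx, Equiv.swap_apply_self]⟩

lemma encard_biUnion_le (S : Finset ι) (f : ι → Set α) (k : ℕ∞)
    (h : ∀ i ∈ S, (f i).encard ≤ k) :
    (⋃ i ∈ S, f i).encard ≤ S.card * k := by
  classical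
  induction S using Finset.induction_on with
  | empty => simp
  | @insert a S haS ih =>
      rw [Finset.set_biUnion_insert]
      calc (f a ∪ ⋃ i ∈ S, f i).encard ≤ (f a).encard + (⋃ i ∈ S, f i).encard :=
            Set.encard_union_le _ _
        _ ≤ k + S.card * k :=
            add_le_add (h a (Finset.mem_insert_self _ _))
              (ih fun i hi => h i (Finset.mem_insert_of_mem hi))
        _ = (insert a S).card * k := by
            rw [Finset.card_insert_of_notMem haS, Nat.cast_add, Nat.cast_one, add_mul, one_mul,
              add_comm]

end Stmt4
namespace Stmt4
open Set

variable (M : KModel) (φ : Fml) (w₀ : M.W)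

/-- The graded type of `b` at world `u`, level `d`. -/
noncomputable def tp (d : ℕ) (u : M.W) (b : M.D) : Finset Fml :=
  φ.sub.filter (fun ψ => ψ.md + d ≤ φ.md ∧ M.sat ψ u b)

/-- The equivalence class of `b` (within the fixed domain) at `(u, d)`. -/
def Cls (d : ℕ) (u : M.W) (b : M.D) : Set M.D :=
  {b' | b' ∈ M.dom w₀ ∧ tp M φ d u b' = tp M φ d u b}

/-- Graded thresholds. -/
def Nd (d : ℕ) : ℕ := (φ.cpt + 1) * (2 ^ (φ.sub.card + 2)) ^ (φ.md - d)

lemma Nd_pos (d : ℕ) : 1 ≤ Nd φ d := by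
  have h1 : 1 ≤ φ.cpt + 1 := by omega
  have h2 : 1 ≤ (2 ^ (φ.sub.card + 2)) ^ (φ.md - d) :=
    Nat.one_le_pow _ _ (Nat.pow_pos (by norm_num))
  calc 1 = 1 * 1 := by ring
    _ ≤ (φ.cpt + 1) * (2 ^ (φ.sub.card + 2)) ^ (φ.md - d) := Nat.mul_le_mul h1 h2

lemma cpt_lt_Nd (d : ℕ) : φ.cpt < Nd φ d := by
  have h2 : 1 ≤ (2 ^ (φ.sub.card + 2)) ^ (φ.md - d) :=
    Nat.one_le_pow _ _ (Nat.pow_pos (by norm_num))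
  calc φ.cpt < φ.cpt + 1 := by omega
    _ = (φ.cpt + 1) * 1 := by ring
    _ ≤ Nd φ d := Nat.mul_le_mul (le_refl _) h2

lemma Nd_succ {d : ℕ} (hd : d < φ.md) :
    Nd φ d = 2 ^ (φ.sub.card + 2) * Nd φ (d + 1) := by
  unfold Nd
  have : φ.md - d = (φ.md - (d + 1)) + 1 := by omega
  rw [this, pow_succ]
  ring

variable {M φ w₀}

lemma mem_tp_iff {d : ℕ} {u : M.W} {b : M.D} {ψ : Fml} (hψ : ψ ∈ φ.sub)
    (hmd : ψ.md + d ≤ φ.md) : ψ ∈ tp M φ d u b ↔ M.sat ψ u b := by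
  simp [tp, hψ, hmd]

lemma sat_iff_of_mem_cls {d : ℕ} {u : M.W} {b b' : M.D} (hb' : b' ∈ Cls M φ w₀ d u b)
    {ψ : Fml} (hψ : ψ ∈ φ.sub) (hmd : ψ.md + d ≤ φ.md) :
    M.sat ψ u b' ↔ M.sat ψ u b := by
  rw [← mem_tp_iff hψ hmd, ← mem_tp_iff hψ hmd (b := b), hb'.2]

lemma mem_cls_self {d : ℕ} {u : M.W} {b : M.D} (hb : b ∈ M.dom w₀) :
    b ∈ Cls M φ w₀ d u b := ⟨hb, rfl⟩

lemma cls_eq_of_mem {d : ℕ} {u : M.W} {b b' : M.D} (hb' : b' ∈ Cls M φ w₀ d u b) :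
    Cls M φ w₀ d u b' = Cls M φ w₀ d u b := by
  unfold Cls
  ext x
  simp only [Set.mem_setOf_eq, hb'.2]

lemma cls_subset_dom {d : ℕ} {u : M.W} {b : M.D} : Cls M φ w₀ d u b ⊆ M.dom w₀ :=
  fun _ h => h.1

/-- Invariant: the finite domain `D'` realizes each class with correct truncated
multiplicity via the assignment `f`. -/
def Inv (D' : Type) (d : ℕ) (u : M.W) (f : D' → M.D) : Prop :=
  (∀ e, f e ∈ M.dom w₀) ∧
  ∀ b ∈ M.dom w₀,
    ((Cls M φ w₀ d u b).encard < (Nd φ d : ℕ∞) →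
      Set.BijOn f {e | f e ∈ Cls M φ w₀ d u b} (Cls M φ w₀ d u b)) ∧
    ((Nd φ d : ℕ∞) ≤ (Cls M φ w₀ d u b).encard →
      (Nd φ d : ℕ∞) ≤ {e | f e ∈ Cls M φ w₀ d u b}.encard)

/-- Transfer of counting thresholds from the original to the abstract domain. -/
lemma count_equiv {D' : Type} {d : ℕ} {u : M.W} {f : D' → M.D}
    (hf : Inv (M := M) (φ := φ) (w₀ := w₀) D' d u f)
    {ψ : Fml} (hψ : ψ ∈ φ.sub) (hmd : ψ.md + d ≤ φ.md) {c : ℕ} (hc : c ≤ φ.cpt) :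
    ({e | M.sat ψ u (f e)}.encard ≤ (c : ℕ∞) ↔
      {b | b ∈ M.dom w₀ ∧ M.sat ψ u b}.encard ≤ (c : ℕ∞)) := by
  set S : Set M.D := {b | b ∈ M.dom w₀ ∧ M.sat ψ u b} with hS
  have hPS : {e | M.sat ψ u (f e)} = {e | f e ∈ S} := by
    ext e; simp only [Set.mem_setOf_eq, hS]
    exact ⟨fun h => ⟨hf.1 e, h⟩, fun h => h.2⟩
  rw [hPS]
  have hclsS : ∀ b ∈ S, Cls M φ w₀ d u b ⊆ S := by
    intro b hb b'' hb''
    exact ⟨hb''.1, (sat_iff_of_mem_cls hb'' hψ hmd).2 hb.2⟩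
  have hcN : (c : ℕ∞) < (Nd φ d : ℕ∞) := by
    exact_mod_cast lt_of_le_of_lt hc (cpt_lt_Nd φ d)
  by_cases hbig : ∃ b ∈ S, (Nd φ d : ℕ∞) ≤ (Cls M φ w₀ d u b).encard
  · obtain ⟨b, hbS, hb⟩ := hbig
    have h1 : ¬ S.encard ≤ (c : ℕ∞) := by
      intro h
      exact absurd (le_trans hb (Set.encard_mono (hclsS b hbS))) (by exact not_le_of_gt (lt_of_le_of_lt h hcN))
    have h2 : ¬ {e | f e ∈ S}.encard ≤ (c : ℕ∞) := by
      intro h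
      have := (hf.2 b (hbS.1)).2 hb
      have hsub : {e | f e ∈ Cls M φ w₀ d u b} ⊆ {e | f e ∈ S} :=
        fun e he => hclsS b hbS he
      exact absurd (le_trans this (Set.encard_mono hsub))
        (not_le_of_gt (lt_of_le_of_lt h hcN))
    simp [h1, h2]
  · push_neg at hbig
    have hbij : Set.BijOn f {e | f e ∈ S} S := by
      refine ⟨fun e he => he, ?_, ?_⟩
      · intro e he e' he' hee
        have hfe : f e ∈ S := he
        have hsmall := (hf.2 (f e) hfe.1).1 (hbig (f e) hfe)
        exact hsmall.injOn (mem_cls_self (hf.1 e)) (by rw [hee]; exact mem_cls_self (hf.1 e')) hee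
      · intro b hb
        have hsmall := (hf.2 b hb.1).1 (hbig b hb)
        obtain ⟨e, he, hfe⟩ := hsmall.surjOn (mem_cls_self hb.1)
        exact ⟨e, by simpa [hfe] using hb, hfe⟩
    have : {b' | b' ∈ M.dom w₀ ∧ M.sat ψ u b'}.encard = {e | f e ∈ S}.encard := by
      rw [← hbij.injOn.encard_image, Set.BijOn.image_eq hbij]
    rw [this]

end Stmt4
namespace Stmt4
open Set

variable {M : KModel} {φ : Fml} {w₀ : M.W}

set_option maxHeartbeats 1000000 in
/-- Distribution of the abstract elements of one big class over the cells
determined by a new world `u'`. -/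
lemma class_assign {D' : Type} (d : ℕ) (hd : d < φ.md) (u u' : M.W) (f : D' → M.D)
    (e₀ : D') (t : Finset Fml) (C : Set M.D) (G : Set D')
    (hCdef : C = {b | b ∈ M.dom w₀ ∧ tp M φ d u b = t})
    (hGdef : G = {e | f e ∈ C}) :
    ∃ gb : D' → M.D,
      (Nd φ d : ℕ∞) ≤ C.encard → (Nd φ d : ℕ∞) ≤ G.encard →
      ((∀ e ∈ G, gb e ∈ C) ∧
       (e₀ ∈ G → gb e₀ = f e₀) ∧
       (∀ b'' ∈ C, (C ∩ Cls M φ w₀ (d+1) u' b'').encard < (Nd φ (d+1) : ℕ∞) →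
          ((C ∩ Cls M φ w₀ (d+1) u' b'') ⊆ gb '' (G ∩ gb ⁻¹' (C ∩ Cls M φ w₀ (d+1) u' b'')) ∧
           Set.InjOn gb (G ∩ gb ⁻¹' (C ∩ Cls M φ w₀ (d+1) u' b'')))) ∧
       (∀ b'' ∈ C, (Nd φ (d+1) : ℕ∞) ≤ (C ∩ Cls M φ w₀ (d+1) u' b'').encard →
          (Nd φ (d+1) : ℕ∞) ≤ (G ∩ gb ⁻¹' (C ∩ Cls M φ w₀ (d+1) u' b'')).encard)) := by
  classical
  by_cases hbig : (Nd φ d : ℕ∞) ≤ C.encard ∧ (Nd φ d : ℕ∞) ≤ G.encard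
  swap
  · exact ⟨f, fun h1 h2 => absurd ⟨h1, h2⟩ hbig⟩
  obtain ⟨hC, hG⟩ := hbig
  set N' : ℕ := Nd φ (d + 1) with hN'
  have hN'pos : 1 ≤ N' := Nd_pos φ (d + 1)
  -- cells
  set cell : Finset Fml → Set M.D := fun τ => {b ∈ C | tp M φ (d+1) u' b = τ} with hcell
  have hcell_disj : ∀ τ τ' b, b ∈ cell τ → b ∈ cell τ' → τ = τ' := by
    intro τ τ' b h1 h2; rw [← h1.2, h2.2]
  have hcell_eq_piece : ∀ b'' ∈ C, C ∩ Cls M φ w₀ (d+1) u' b'' = cell (tp M φ (d+1) u' b'') := by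
    intro b'' hb''
    ext x
    simp only [hcell, Set.mem_inter_iff, Set.mem_setOf_eq, Cls]
    constructor
    · rintro ⟨hx, _, hx2⟩; exact ⟨hx, hx2⟩
    · rintro ⟨hx, hx2⟩
      exact ⟨hx, (by rw [hCdef] at hx; exact hx.1), hx2⟩
  -- the sets S τ
  have hSex : ∀ τ : Finset Fml, ∃ T : Set M.D, T ⊆ cell τ ∧
      ((cell τ).encard < (N' : ℕ∞) → T = cell τ) ∧
      (¬ (cell τ).encard < (N' : ℕ∞) →
        T.encard = (N' : ℕ∞) ∧ (f e₀ ∈ cell τ → f e₀ ∈ T)) := by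
    intro τ
    by_cases hsm : (cell τ).encard < (N' : ℕ∞)
    · exact ⟨cell τ, le_refl _, fun _ => rfl, fun h => absurd hsm h⟩
    · push_neg at hsm
      by_cases he : f e₀ ∈ cell τ
      · obtain ⟨T, hT1, hT2, hT3⟩ := exists_subset_encard_mem hN'pos hsm he
        exact ⟨T, hT1, fun h => absurd h (not_lt.2 hsm), fun _ => ⟨hT3, fun _ => hT2⟩⟩
      · obtain ⟨T, hT1, hT2⟩ := Set.exists_subset_encard_eq hsm
        exact ⟨T, hT1, fun h => absurd h (not_lt.2 hsm), fun _ => ⟨hT2, fun h => absurd h he⟩⟩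
  choose S hS1 hS2 hS3 using hSex
  have hScard : ∀ τ, (S τ).encard ≤ (N' : ℕ∞) := by
    intro τ
    by_cases hsm : (cell τ).encard < (N' : ℕ∞)
    · rw [hS2 τ hsm]; exact le_of_lt hsm
    · exact le_of_eq ((hS3 τ hsm).1)
  set pow : Finset (Finset Fml) := φ.sub.powerset with hpow
  set P : Set M.D := ⋃ τ ∈ pow, S τ with hP
  have htp_mem_pow : ∀ b, tp M φ (d+1) u' b ∈ pow := by
    intro b; rw [hpow, Finset.mem_powerset]; exact Finset.filter_subset _ _
  have hPsub : P ⊆ C := by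
    rw [hP]
    intro x hx
    simp only [Set.mem_iUnion] at hx
    obtain ⟨τ, _, hxτ⟩ := hx
    exact (hS1 τ hxτ).1
  have hPcard : P.encard ≤ ((2 ^ φ.sub.card * N' : ℕ) : ℕ∞) := by
    have := encard_biUnion_le pow S (N' : ℕ∞) (fun τ _ => hScard τ)
    rw [hP]
    refine this.trans ?_
    rw [hpow, Finset.card_powerset]
    norm_cast
  have harith : (2 ^ φ.sub.card * N' : ℕ) ≤ Nd φ d := by
    rw [Nd_succ φ hd, ← hN']
    have : (2:ℕ) ^ φ.sub.card ≤ 2 ^ (φ.sub.card + 2) := Nat.pow_le_pow_right (by norm_num) (by omega)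
    exact Nat.mul_le_mul this (le_refl _)
  have hPG : P.encard ≤ G.encard :=
    le_trans (hPcard.trans (by exact_mod_cast harith)) hG
  have hPfin : P.Finite := by
    rw [← Set.encard_ne_top_iff]
    intro h
    rw [h, top_le_iff] at hPcard
    exact (ENat.coe_ne_top _) hPcard
  -- G₀ and β
  have hG₀ex : ∃ (G₀ : Set D') (β : D' → M.D), G₀ ⊆ G ∧ Set.BijOn β G₀ P ∧
      (e₀ ∈ G → e₀ ∈ G₀ ∧ β e₀ = f e₀) := by
    haveI : Nonempty M.D := M.Dne
    by_cases he₀ : e₀ ∈ G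
    · have hb₀C : f e₀ ∈ C := by rw [hGdef] at he₀; exact he₀
      have hb₀cell : f e₀ ∈ cell (tp M φ (d+1) u' (f e₀)) := ⟨hb₀C, rfl⟩
      have hb₀P : f e₀ ∈ P := by
        rw [hP]
        refine Set.mem_biUnion (htp_mem_pow (f e₀)) ?_
        by_cases hsm : (cell (tp M φ (d+1) u' (f e₀))).encard < (N' : ℕ∞)
        · rw [hS2 _ hsm]; exact hb₀cell
        · exact (hS3 _ hsm).2 hb₀cell
      obtain ⟨p, hpP⟩ : ∃ p : ℕ, P.encard = p := ⟨P.ncard, by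
        rw [Set.Finite.encard_eq_coe_toFinset_card hPfin, Set.ncard_eq_toFinset_card _ hPfin]⟩
      have hp1 : 1 ≤ p := by
        have : (1 : ℕ∞) ≤ P.encard := Set.one_le_encard_iff_nonempty.2 ⟨f e₀, hb₀P⟩
        rw [hpP] at this; exact_mod_cast this
      obtain ⟨G₀, hG₀G, he₀G₀, hG₀card⟩ :=
        exists_subset_encard_mem hp1 (by rw [← hpP]; exact hPG) he₀
      obtain ⟨β, hβ, hβe₀⟩ := exists_bijOn_of_encard_eq' (by rw [hG₀card, hpP])
        (by rw [← Set.encard_ne_top_iff, hG₀card]; simp) he₀G₀ hb₀P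
      exact ⟨G₀, β, hG₀G, hβ, fun _ => ⟨he₀G₀, hβe₀⟩⟩
    · obtain ⟨G₀, hG₀G, hG₀card⟩ := Set.exists_subset_encard_eq hPG
      obtain ⟨β, hβ⟩ := exists_bijOn_of_encard_eq hG₀card
        (by rw [← Set.encard_ne_top_iff, hG₀card, Set.encard_ne_top_iff]; exact hPfin)
      exact ⟨G₀, β, hG₀G, hβ, fun h => absurd h he₀⟩
  obtain ⟨G₀, β, hG₀G, hβ, hβe₀⟩ := hG₀ex
  -- the dump element
  have hdump : ∃ bs, bs ∈ C ∧ (N' : ℕ∞) ≤ (cell (tp M φ (d+1) u' bs)).encard := by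
    by_contra hcon
    push_neg at hcon
    have hCsub : C ⊆ ⋃ τ ∈ pow, cell τ := by
      intro b hb
      exact Set.mem_biUnion (htp_mem_pow b) ⟨hb, rfl⟩
    have hcellcard : ∀ τ ∈ pow, (cell τ).encard ≤ (N' : ℕ∞) := by
      intro τ _
      rcases Set.eq_empty_or_nonempty (cell τ) with h | ⟨b, hb⟩
      · simp [h]
      · have : tp M φ (d+1) u' b = τ := hb.2
        rw [← this]
        exact le_of_lt (hcon b hb.1)
    have h1 : C.encard ≤ ((2 ^ φ.sub.card * N' : ℕ) : ℕ∞) := by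
      refine (Set.encard_mono hCsub).trans ?_
      refine (encard_biUnion_le pow cell (N' : ℕ∞) hcellcard).trans ?_
      rw [hpow, Finset.card_powerset]; norm_cast
    have h2 : ((2 ^ φ.sub.card * N' : ℕ) : ℕ∞) < (Nd φ d : ℕ∞) := by
      have : (2 ^ φ.sub.card * N' : ℕ) < Nd φ d := by
        rw [Nd_succ φ hd, ← hN']
        have h3 : (2:ℕ) ^ φ.sub.card < 2 ^ (φ.sub.card + 2) :=
          Nat.pow_lt_pow_right (by norm_num) (by omega)
        exact Nat.mul_lt_mul_of_lt_of_le h3 (le_refl _) (by omega)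
      exact_mod_cast this
    exact absurd hC (not_le_of_gt (lt_of_le_of_lt h1 h2))
  obtain ⟨bs, hbsC, hbsbig⟩ := hdump
  -- the assignment
  refine ⟨fun e => if e ∈ G₀ then β e else bs, fun _ _ => ?_⟩
  set gb : D' → M.D := fun e => if e ∈ G₀ then β e else bs with hgb
  have hgbC : ∀ e ∈ G, gb e ∈ C := by
    intro e _
    rw [hgb]
    by_cases h : e ∈ G₀
    · simp only [if_pos h]; exact hPsub (hβ.mapsTo h)
    · simp only [if_neg h]; exact hbsC
  refine ⟨hgbC, ?_, ?_, ?_⟩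
  · -- gb e₀ = f e₀
    intro he₀
    obtain ⟨h1, h2⟩ := hβe₀ he₀
    simp only [hgb, if_pos h1]
    exact h2
  · -- small pieces
    intro b'' hb'' hsmall
    rw [hcell_eq_piece b'' hb''] at hsmall ⊢
    set τ := tp M φ (d+1) u' b'' with hτ
    have hSeq : S τ = cell τ := hS2 τ hsmall
    constructor
    · intro b3 hb3
      have hb3P : b3 ∈ P := by
        rw [hP]
        exact Set.mem_biUnion (htp_mem_pow b'') (by rw [hSeq]; exact hb3)
      obtain ⟨e, heG₀, hβe⟩ := hβ.surjOn hb3P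
      refine ⟨e, ⟨hG₀G heG₀, ?_⟩, ?_⟩
      · show gb e ∈ cell τ
        simp only [hgb, if_pos heG₀]
        rw [hβe]; exact hb3
      · simp only [hgb, if_pos heG₀]; exact hβe
    · intro x hx y hy hxy
      have hmemG₀ : ∀ z, z ∈ G ∩ gb ⁻¹' (cell τ) → z ∈ G₀ := by
        intro z hz
        by_contra hzn
        have hzbs : gb z = bs := by simp only [hgb, if_neg hzn]
        have hbsmem : bs ∈ cell τ := by rw [← hzbs]; exact hz.2
        have htpbs : tp M φ (d+1) u' bs = τ := hbsmem.2
        rw [← htpbs] at hsmall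
        exact absurd hbsbig (not_le_of_gt hsmall)
      have hxG₀ := hmemG₀ x hx
      have hyG₀ := hmemG₀ y hy
      refine hβ.injOn hxG₀ hyG₀ ?_
      simpa only [hgb, if_pos hxG₀, if_pos hyG₀] using hxy
  · -- big pieces
    intro b'' hb'' hbig'
    rw [hcell_eq_piece b'' hb''] at hbig' ⊢
    set τ := tp M φ (d+1) u' b'' with hτ
    have hnot : ¬ (cell τ).encard < (N' : ℕ∞) := not_lt.2 hbig'
    obtain ⟨hST, -⟩ := hS3 τ hnot
    have hYsub : G₀ ∩ β ⁻¹' (S τ) ⊆ G ∩ gb ⁻¹' (cell τ) := by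
      intro e he
      refine ⟨hG₀G he.1, ?_⟩
      show gb e ∈ cell τ
      simp only [hgb, if_pos he.1]
      exact hS1 τ he.2
    have himg : S τ ⊆ β '' (G₀ ∩ β ⁻¹' (S τ)) := by
      intro b3 hb3
      have hb3P : b3 ∈ P := by
        rw [hP]
        exact Set.mem_biUnion (htp_mem_pow b'') hb3
      obtain ⟨e, he, hβe⟩ := hβ.surjOn hb3P
      exact ⟨e, ⟨he, by rw [Set.mem_preimage, hβe]; exact hb3⟩, hβe⟩
    calc (N' : ℕ∞) = (S τ).encard := hST.symm
      _ ≤ (β '' (G₀ ∩ β ⁻¹' (S τ))).encard := Set.encard_mono himg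
      _ ≤ (G₀ ∩ β ⁻¹' (S τ)).encard := Set.encard_image_le _ _
      _ ≤ _ := Set.encard_mono hYsub
end Stmt4
namespace Stmt4
open Set

variable {M : KModel} {φ : Fml} {w₀ : M.W}

set_option maxHeartbeats 1600000 in
/-- Key step: the invariant can be pushed to any new world `u'`, preserving the
level-`d` class of every abstract element and fixing a designated element. -/
lemma key_step {D' : Type} {d : ℕ} (hd : d < φ.md) {u : M.W} (u' : M.W) {f : D' → M.D}
    (hf : Inv (M := M) (φ := φ) (w₀ := w₀) D' d u f) (e₀ : D') :
    ∃ g : D' → M.D, g e₀ = f e₀ ∧ (∀ e, g e ∈ Cls M φ w₀ d u (f e)) ∧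
      Inv (M := M) (φ := φ) (w₀ := w₀) D' (d+1) u' g := by
  classical
  have hass := fun t : Finset Fml => class_assign (w₀ := w₀) d hd u u' f e₀ t
    {b | b ∈ M.dom w₀ ∧ tp M φ d u b = t}
    {e | f e ∈ {b | b ∈ M.dom w₀ ∧ tp M φ d u b = t}} rfl rfl
  choose gA hgA using hass
  set g : D' → M.D := fun e =>
    if (Cls M φ w₀ d u (f e)).encard < (Nd φ d : ℕ∞) then f e
    else gA (tp M φ d u (f e)) e with hgdef
  have hgsmall : ∀ e, (Cls M φ w₀ d u (f e)).encard < (Nd φ d : ℕ∞) → g e = f e := by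
    intro e h; simp only [hgdef, if_pos h]
  have hgbig : ∀ e, ¬ (Cls M φ w₀ d u (f e)).encard < (Nd φ d : ℕ∞) →
      g e = gA (tp M φ d u (f e)) e := by
    intro e h; simp only [hgdef, if_neg h]
  have hprops : ∀ b : M.D, b ∈ M.dom w₀ → ¬ (Cls M φ w₀ d u b).encard < (Nd φ d : ℕ∞) →
      ((∀ e' ∈ {e' | f e' ∈ Cls M φ w₀ d u b},
          gA (tp M φ d u b) e' ∈ Cls M φ w₀ d u b) ∧
       (e₀ ∈ {e' | f e' ∈ Cls M φ w₀ d u b} → gA (tp M φ d u b) e₀ = f e₀) ∧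
       (∀ b'' ∈ Cls M φ w₀ d u b,
          (Cls M φ w₀ d u b ∩ Cls M φ w₀ (d+1) u' b'').encard < (Nd φ (d+1) : ℕ∞) →
          ((Cls M φ w₀ d u b ∩ Cls M φ w₀ (d+1) u' b'') ⊆
              gA (tp M φ d u b) '' ({e' | f e' ∈ Cls M φ w₀ d u b} ∩
                gA (tp M φ d u b) ⁻¹' (Cls M φ w₀ d u b ∩ Cls M φ w₀ (d+1) u' b'')) ∧
           Set.InjOn (gA (tp M φ d u b)) ({e' | f e' ∈ Cls M φ w₀ d u b} ∩
                gA (tp M φ d u b) ⁻¹' (Cls M φ w₀ d u b ∩ Cls M φ w₀ (d+1) u' b'')))) ∧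
       (∀ b'' ∈ Cls M φ w₀ d u b,
          (Nd φ (d+1) : ℕ∞) ≤ (Cls M φ w₀ d u b ∩ Cls M φ w₀ (d+1) u' b'').encard →
          (Nd φ (d+1) : ℕ∞) ≤ ({e' | f e' ∈ Cls M φ w₀ d u b} ∩
                gA (tp M φ d u b) ⁻¹' (Cls M φ w₀ d u b ∩ Cls M φ w₀ (d+1) u' b'')).encard)) := by
    intro b hb he
    have hC : (Nd φ d : ℕ∞) ≤ (Cls M φ w₀ d u b).encard := not_lt.1 he
    have hG : (Nd φ d : ℕ∞) ≤ {e' | f e' ∈ Cls M φ w₀ d u b}.encard :=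
      (hf.2 b hb).2 hC
    exact hgA (tp M φ d u b) hC hG
  have hgcls : ∀ e, g e ∈ Cls M φ w₀ d u (f e) := by
    intro e
    by_cases h : (Cls M φ w₀ d u (f e)).encard < (Nd φ d : ℕ∞)
    · rw [hgsmall e h]; exact mem_cls_self (hf.1 e)
    · rw [hgbig e h]
      exact (hprops (f e) (hf.1 e) h).1 e (mem_cls_self (hf.1 e))
  have hge₀ : g e₀ = f e₀ := by
    by_cases h : (Cls M φ w₀ d u (f e₀)).encard < (Nd φ d : ℕ∞)
    · exact hgsmall e₀ h
    · rw [hgbig e₀ h]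
      exact (hprops (f e₀) (hf.1 e₀) h).2.1 (mem_cls_self (hf.1 e₀))
  -- pointwise surjectivity helper
  have hsurj_pt : ∀ b' : M.W → M.D → Prop, True := fun _ => trivial
  clear hsurj_pt
  have hsurj : ∀ (b' : M.D) (b'' : M.D), b'' ∈ Cls M φ w₀ (d+1) u' b' →
      ((Cls M φ w₀ d u b'').encard < (Nd φ d : ℕ∞) ∨
       (Cls M φ w₀ d u b'' ∩ Cls M φ w₀ (d+1) u' b'').encard < (Nd φ (d+1) : ℕ∞)) →
      ∃ e, g e ∈ Cls M φ w₀ (d+1) u' b' ∧ g e = b'' := by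
    intro b' b'' hb'' hcase
    have hdom'' : b'' ∈ M.dom w₀ := hb''.1
    by_cases hsC : (Cls M φ w₀ d u b'').encard < (Nd φ d : ℕ∞)
    · obtain ⟨e, he, hfe⟩ := ((hf.2 b'' hdom'').1 hsC).surjOn (mem_cls_self hdom'')
      have hcls : Cls M φ w₀ d u (f e) = Cls M φ w₀ d u b'' := by rw [hfe]
      have hge : g e = f e := hgsmall e (by rw [hcls]; exact hsC)
      exact ⟨e, by rw [hge, hfe]; exact hb'', by rw [hge, hfe]⟩
    · have hpiece : (Cls M φ w₀ d u b'' ∩ Cls M φ w₀ (d+1) u' b'').encard <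
          (Nd φ (d+1) : ℕ∞) := hcase.resolve_left hsC
      obtain ⟨e, he, hgAe⟩ := ((hprops b'' hdom'' hsC).2.2.1 b''
        (mem_cls_self hdom'') hpiece).1 ⟨mem_cls_self hdom'', mem_cls_self hdom''⟩
      have hclse : Cls M φ w₀ d u (f e) = Cls M φ w₀ d u b'' := cls_eq_of_mem he.1
      have htpe : tp M φ d u (f e) = tp M φ d u b'' := he.1.2
      have hge : g e = b'' := by
        rw [hgbig e (by rw [hclse]; exact hsC), htpe, hgAe]
      exact ⟨e, by rw [hge]; exact hb'', hge⟩
  refine ⟨g, hge₀, hgcls, fun e => (hgcls e).1, fun b' hb' => ⟨?_, ?_⟩⟩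
  · -- small cell at (u', d+1) : exact bijection
    intro hsm
    refine ⟨fun e he => he, ?_, ?_⟩
    · -- injectivity on the fiber
      intro x hx y hy hxy
      have hclsxy : Cls M φ w₀ d u (f x) = Cls M φ w₀ d u (f y) := by
        have h1 := cls_eq_of_mem (hgcls x)
        have h2 := cls_eq_of_mem (hgcls y)
        rw [← h1, ← h2, hxy]
      by_cases hsx : (Cls M φ w₀ d u (f x)).encard < (Nd φ d : ℕ∞)
      · have hsy : (Cls M φ w₀ d u (f y)).encard < (Nd φ d : ℕ∞) := by
          rw [← hclsxy]; exact hsx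
        refine ((hf.2 (f x) (hf.1 x)).1 hsx).injOn ?_ ?_ ?_
        · exact mem_cls_self (hf.1 x)
        · show f y ∈ Cls M φ w₀ d u (f x)
          rw [hclsxy]; exact mem_cls_self (hf.1 y)
        · rw [← hgsmall x hsx, ← hgsmall y hsy]; exact hxy
      · have hsy : ¬ (Cls M φ w₀ d u (f y)).encard < (Nd φ d : ℕ∞) := by
          rw [← hclsxy]; exact hsx
        have htpxy : tp M φ d u (f y) = tp M φ d u (f x) := by
          have : f y ∈ Cls M φ w₀ d u (f x) := by
            rw [hclsxy]; exact mem_cls_self (hf.1 y)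
          exact this.2
        have hgx := hgbig x hsx
        have hgy : g y = gA (tp M φ d u (f x)) y := by rw [hgbig y hsy, htpxy]
        have hcls' : Cls M φ w₀ (d+1) u' (g x) = Cls M φ w₀ (d+1) u' b' :=
          cls_eq_of_mem hx
        have hpsmall : (Cls M φ w₀ d u (f x) ∩ Cls M φ w₀ (d+1) u' (g x)).encard <
            (Nd φ (d+1) : ℕ∞) := by
          refine lt_of_le_of_lt (Set.encard_mono ?_) hsm
          rw [hcls']; exact Set.inter_subset_right
        have hinj := ((hprops (f x) (hf.1 x) hsx).2.2.1 (g x) (hgcls x) hpsmall).2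
        refine hinj ⟨mem_cls_self (hf.1 x), ?_⟩ ⟨?_, ?_⟩ ?_
        · rw [Set.mem_preimage, ← hgx]
          exact ⟨hgcls x, mem_cls_self (hgcls x).1⟩
        · show f y ∈ Cls M φ w₀ d u (f x)
          rw [hclsxy]; exact mem_cls_self (hf.1 y)
        · rw [Set.mem_preimage, ← hgy, ← hxy]
          exact ⟨hgcls x, mem_cls_self (hgcls x).1⟩
        · rw [← hgx, ← hgy]; exact hxy
    · -- surjectivity onto the cell
      intro b'' hb''
      have hp : (Cls M φ w₀ d u b'' ∩ Cls M φ w₀ (d+1) u' b'').encard <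
          (Nd φ (d+1) : ℕ∞) := by
        refine lt_of_le_of_lt (Set.encard_mono ?_) hsm
        rw [cls_eq_of_mem hb'']
        exact Set.inter_subset_right
      obtain ⟨e, he1, he2⟩ := hsurj b' b'' hb'' (Or.inr hp)
      exact ⟨e, he1, he2⟩
  · -- big cell at (u', d+1)
    intro hbg
    by_cases hex : ∃ b'' ∈ Cls M φ w₀ (d+1) u' b',
        (Nd φ (d+1) : ℕ∞) ≤ (Cls M φ w₀ d u b'' ∩ Cls M φ w₀ (d+1) u' b'').encard
    · obtain ⟨b'', hb'', hpbig⟩ := hex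
      have hdom'' : b'' ∈ M.dom w₀ := hb''.1
      have hcls' : Cls M φ w₀ (d+1) u' b'' = Cls M φ w₀ (d+1) u' b' := cls_eq_of_mem hb''
      by_cases hsC : (Cls M φ w₀ d u b'').encard < (Nd φ d : ℕ∞)
      · have hbij := (hf.2 b'' hdom'').1 hsC
        set X := {e | f e ∈ Cls M φ w₀ d u b'' ∩ Cls M φ w₀ (d+1) u' b''} with hX
        have himg : (Cls M φ w₀ d u b'' ∩ Cls M φ w₀ (d+1) u' b'') ⊆ f '' X := by
          intro b3 hb3
          obtain ⟨e, he, hfe⟩ := hbij.surjOn hb3.1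
          refine ⟨e, ?_, hfe⟩
          rw [hX]
          simp only [Set.mem_setOf_eq, hfe]
          exact hb3
        have hXsub : X ⊆ {e | g e ∈ Cls M φ w₀ (d+1) u' b'} := by
          intro e he
          have hcl : Cls M φ w₀ d u (f e) = Cls M φ w₀ d u b'' := cls_eq_of_mem he.1
          have hge : g e = f e := hgsmall e (by rw [hcl]; exact hsC)
          simp only [Set.mem_setOf_eq]
          rw [hge, ← hcls']
          exact he.2
        calc (Nd φ (d+1) : ℕ∞) ≤ _ := hpbig
          _ ≤ (f '' X).encard := Set.encard_mono himg
          _ ≤ X.encard := Set.encard_image_le _ _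
          _ ≤ _ := Set.encard_mono hXsub
      · have hbig2 := (hprops b'' hdom'' hsC).2.2.2 b'' (mem_cls_self hdom'') hpbig
        refine le_trans hbig2 (Set.encard_mono ?_)
        intro e he
        have hclse : Cls M φ w₀ d u (f e) = Cls M φ w₀ d u b'' := cls_eq_of_mem he.1
        have htpe : tp M φ d u (f e) = tp M φ d u b'' := he.1.2
        have hge : g e = gA (tp M φ d u b'') e := by
          rw [hgbig e (by rw [hclse]; exact hsC), htpe]
        show g e ∈ Cls M φ w₀ (d+1) u' b'
        rw [hge, ← hcls']
        exact he.2.2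
    · push_neg at hex
      have hsub : Cls M φ w₀ (d+1) u' b' ⊆ g '' {e | g e ∈ Cls M φ w₀ (d+1) u' b'} := by
        intro b'' hb''
        obtain ⟨e, he1, he2⟩ := hsurj b' b'' hb'' (Or.inr (hex b'' hb''))
        exact ⟨e, he1, he2⟩
      calc (Nd φ (d+1) : ℕ∞) ≤ (Cls M φ w₀ (d+1) u' b').encard := hbg
        _ ≤ (g '' {e | g e ∈ Cls M φ w₀ (d+1) u' b'}).encard := Set.encard_mono hsub
        _ ≤ _ := Set.encard_image_le _ _

end Stmt4
namespace Stmt4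
open Set

variable {M : KModel} {φ : Fml} {w₀ : M.W}

set_option maxHeartbeats 800000 in
/-- Root setup: a small subdomain realizing the invariant at the root world. -/
lemma root_setup (a₀ : M.D) (ha₀ : a₀ ∈ M.dom w₀) :
    ∃ D0 : Set M.D, a₀ ∈ D0 ∧ D0.Finite ∧
      D0.encard ≤ ((2 ^ φ.sub.card * Nd φ 0 : ℕ) : ℕ∞) ∧
      Inv (M := M) (φ := φ) (w₀ := w₀) ↥D0 0 w₀ Subtype.val := by
  classical
  set N0 : ℕ := Nd φ 0 with hN0
  have hN0pos : 1 ≤ N0 := Nd_pos φ 0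
  set cell : Finset Fml → Set M.D := fun τ => {b | b ∈ M.dom w₀ ∧ tp M φ 0 w₀ b = τ}
    with hcell
  have hSex : ∀ τ : Finset Fml, ∃ T : Set M.D, T ⊆ cell τ ∧
      ((cell τ).encard < (N0 : ℕ∞) → T = cell τ) ∧
      (¬ (cell τ).encard < (N0 : ℕ∞) →
        T.encard = (N0 : ℕ∞) ∧ (a₀ ∈ cell τ → a₀ ∈ T)) := by
    intro τ
    by_cases hsm : (cell τ).encard < (N0 : ℕ∞)
    · exact ⟨cell τ, le_refl _, fun _ => rfl, fun h => absurd hsm h⟩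
    · push_neg at hsm
      by_cases he : a₀ ∈ cell τ
      · obtain ⟨T, hT1, hT2, hT3⟩ := exists_subset_encard_mem hN0pos hsm he
        exact ⟨T, hT1, fun h => absurd h (not_lt.2 hsm), fun _ => ⟨hT3, fun _ => hT2⟩⟩
      · obtain ⟨T, hT1, hT2⟩ := Set.exists_subset_encard_eq hsm
        exact ⟨T, hT1, fun h => absurd h (not_lt.2 hsm), fun _ => ⟨hT2, fun h => absurd h he⟩⟩
  choose S hS1 hS2 hS3 using hSex
  have hScard : ∀ τ, (S τ).encard ≤ (N0 : ℕ∞) := by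
    intro τ
    by_cases hsm : (cell τ).encard < (N0 : ℕ∞)
    · rw [hS2 τ hsm]; exact le_of_lt hsm
    · exact le_of_eq ((hS3 τ hsm).1)
  set pow : Finset (Finset Fml) := φ.sub.powerset with hpow
  set D0 : Set M.D := ⋃ τ ∈ pow, S τ with hD0
  have htp_mem_pow : ∀ b : M.D, tp M φ 0 w₀ b ∈ pow := by
    intro b; rw [hpow, Finset.mem_powerset]; exact Finset.filter_subset _ _
  have hD0dom : D0 ⊆ M.dom w₀ := by
    rw [hD0]
    intro x hx
    simp only [Set.mem_iUnion] at hx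
    obtain ⟨τ, _, hxτ⟩ := hx
    exact (hS1 τ hxτ).1
  have hD0card : D0.encard ≤ ((2 ^ φ.sub.card * N0 : ℕ) : ℕ∞) := by
    refine (encard_biUnion_le pow S (N0 : ℕ∞) (fun τ _ => hScard τ)).trans ?_
    rw [hpow, Finset.card_powerset]; norm_cast
  have hD0fin : D0.Finite := by
    rw [← Set.encard_ne_top_iff]
    intro h
    rw [h, top_le_iff] at hD0card
    exact (ENat.coe_ne_top _) hD0card
  have hmemS : ∀ b ∈ M.dom w₀, b ∈ S (tp M φ 0 w₀ b) → b ∈ D0 := by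
    intro b _ hb
    rw [hD0]
    exact Set.mem_biUnion (htp_mem_pow b) hb
  have ha₀cell : a₀ ∈ cell (tp M φ 0 w₀ a₀) := ⟨ha₀, rfl⟩
  have ha₀D0 : a₀ ∈ D0 := by
    refine hmemS a₀ ha₀ ?_
    by_cases hsm : (cell (tp M φ 0 w₀ a₀)).encard < (N0 : ℕ∞)
    · rw [hS2 _ hsm]; exact ha₀cell
    · exact (hS3 _ hsm).2 ha₀cell
  -- the class of b equals its cell
  have hcls_cell : ∀ b ∈ M.dom w₀, Cls M φ w₀ 0 w₀ b = cell (tp M φ 0 w₀ b) := by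
    intro b _; rfl
  refine ⟨D0, ha₀D0, hD0fin, hD0card, fun e => hD0dom e.2, fun b hb => ⟨?_, ?_⟩⟩
  · -- small class
    intro hsm
    rw [hcls_cell b hb] at hsm ⊢
    have hSeq : S (tp M φ 0 w₀ b) = cell (tp M φ 0 w₀ b) := hS2 _ hsm
    refine ⟨fun e he => he, fun x _ y _ hxy => Subtype.ext hxy, ?_⟩
    intro b3 hb3
    have hb3D0 : b3 ∈ D0 := by
      refine hmemS b3 hb3.1 ?_
      have : tp M φ 0 w₀ b3 = tp M φ 0 w₀ b := hb3.2
      rw [this, hSeq]; exact hb3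
    exact ⟨⟨b3, hb3D0⟩, hb3, rfl⟩
  · -- big class
    intro hbg
    rw [hcls_cell b hb] at hbg ⊢
    have hnot : ¬ (cell (tp M φ 0 w₀ b)).encard < (N0 : ℕ∞) := not_lt.2 hbg
    obtain ⟨hST, -⟩ := hS3 _ hnot
    have hsub : S (tp M φ 0 w₀ b) ⊆
        Subtype.val '' {e : ↥D0 | (e : M.D) ∈ cell (tp M φ 0 w₀ b)} := by
      intro x hx
      have hxcell : x ∈ cell (tp M φ 0 w₀ b) := hS1 _ hx
      have hxD0 : x ∈ D0 := by
        refine hmemS x hxcell.1 ?_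
        have : tp M φ 0 w₀ x = tp M φ 0 w₀ b := hxcell.2
        rw [this]; exact hx
      exact ⟨⟨x, hxD0⟩, hxcell, rfl⟩
    calc (N0 : ℕ∞) = (S (tp M φ 0 w₀ b)).encard := hST.symm
      _ ≤ (Subtype.val '' {e : ↥D0 | (e : M.D) ∈ cell (tp M φ 0 w₀ b)}).encard :=
          Set.encard_mono hsub
      _ ≤ _ := Set.encard_image_le _ _

end Stmt4
namespace Stmt4

/-- Generic recursion along reversed paths of the witness tree. -/
def FW {W F B : Type} (init : W × F) (step : ℕ → W × F → B → W × F) : List B → W × F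
  | [] => init
  | x :: l => step l.length (FW init step l) x

/-- Activity predicate for nodes of the witness tree. -/
def Act {W F B : Type} (init : W × F) (step : ℕ → W × F → B → W × F)
    (P : ℕ → W × F → B → Prop) : List B → Prop
  | [] => True
  | x :: l => Act init step P l ∧ P l.length (FW init step l) x

end Stmt4
/-- exponential finite model property for the one-variable fragment of QK
with unbounded counting quantifiers (binary-coded subscripts). -/
theorem stmt_4 : ∃ k : ℕ, ∀ φ : Fml, satQK φ →
    ∃ M : KModel, M.constDom ∧ Finite M.W ∧ Finite M.D ∧
      Nat.card M.W ≤ 2 ^ ((φ.len + 2) ^ k) ∧ Nat.card M.D ≤ 2 ^ ((φ.len + 2) ^ k) ∧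
      ∃ w a, a ∈ M.dom w ∧ M.sat φ w a := by
  classical
  refine ⟨4, ?_⟩
  intro φ hsat
  obtain ⟨M, hcd, w₀, a₀, ha₀, hsatφ⟩ := hsat
  obtain ⟨D0set, ha₀D0, hD0fin, hD0card, hInv0⟩ :=
    Stmt4.root_setup (M := M) (φ := φ) (w₀ := w₀) a₀ ha₀
  haveI : Finite ↥D0set := hD0fin.to_subtype
  set m : ℕ := φ.md with hm
  set B : Type := ↥D0set × {ψ : Fml // ψ ∈ φ.sub} with hB
  -- total step function
  have hstep_ex : ∀ (d : ℕ) (p : M.W × (↥D0set → M.D)) (x : B),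
      ∃ q : M.W × (↥D0set → M.D),
      d < m → Stmt4.Inv (M := M) (φ := φ) (w₀ := w₀) ↥D0set d p.1 p.2 →
      M.sat (Fml.dia x.2.1) p.1 (p.2 x.1) →
      (M.R p.1 q.1 ∧ M.sat x.2.1 q.1 (q.2 x.1) ∧
       (∀ e, q.2 e ∈ Stmt4.Cls M φ w₀ d p.1 (p.2 e)) ∧
       Stmt4.Inv (M := M) (φ := φ) (w₀ := w₀) ↥D0set (d+1) q.1 q.2) := by
    intro d p x
    by_cases h : d < m ∧ Stmt4.Inv (M := M) (φ := φ) (w₀ := w₀) ↥D0set d p.1 p.2 ∧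
        M.sat (Fml.dia x.2.1) p.1 (p.2 x.1)
    · obtain ⟨hd, hI, hs⟩ := h
      have hs' : ∃ v, M.R p.1 v ∧ M.sat x.2.1 v (p.2 x.1) := hs
      obtain ⟨v, hv, hsv⟩ := hs'
      obtain ⟨g, hge₀, hgcls, hgInv⟩ := Stmt4.key_step hd v hI x.1
      have hsv2 : M.sat x.2.1 (v, g).1 ((v, g).2 x.1) := by
        show M.sat x.2.1 v (g x.1)
        rw [hge₀]; exact hsv
      exact ⟨(v, g), fun _ _ _ => ⟨hv, hsv2, hgcls, hgInv⟩⟩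
    · exact ⟨p, fun h1 h2 h3 => absurd ⟨h1, h2, h3⟩ h⟩
  choose step hstep using hstep_ex
  set init : M.W × (↥D0set → M.D) := (w₀, Subtype.val) with hinit
  set h : List B → M.W := fun l => (Stmt4.FW init step l).1 with hh
  set ρ : List B → ↥D0set → M.D := fun l => (Stmt4.FW init step l).2 with hρ
  set P : ℕ → M.W × (↥D0set → M.D) → B → Prop :=
    fun d p x => d < m ∧ M.sat (Fml.dia x.2.1) p.1 (p.2 x.1) with hP
  set act : List B → Prop := Stmt4.Act init step P with hact
  have hactInv : ∀ l : List B, act l →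
      Stmt4.Inv (M := M) (φ := φ) (w₀ := w₀) ↥D0set l.length (h l) (ρ l) := by
    intro l
    induction l with
    | nil => intro _; exact hInv0
    | cons x l ih =>
        intro hal
        have hal2 : act l ∧ P l.length (Stmt4.FW init step l) x := hal
        exact (hstep l.length (Stmt4.FW init step l) x hal2.2.1 (ih hal2.1) hal2.2.2).2.2.2
  have hactstep : ∀ (l : List B) (x : B), act (x :: l) →
      (M.R (h l) (h (x :: l)) ∧ M.sat x.2.1 (h (x :: l)) (ρ (x :: l) x.1) ∧
       ∀ e, ρ (x :: l) e ∈ Stmt4.Cls M φ w₀ l.length (h l) (ρ l e)) := by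
    intro l x hal
    have hal2 : act l ∧ P l.length (Stmt4.FW init step l) x := hal
    have := hstep l.length (Stmt4.FW init step l) x hal2.2.1 (hactInv l hal2.1) hal2.2.2
    exact ⟨this.1, this.2.1, this.2.2.1⟩
  -- the finite model
  set M' : KModel :=
    { W := {l : List B // l.length ≤ m}
      R := fun v w => (∃ x : B, w.1 = x :: v.1) ∧ act w.1
      D := ↥D0set
      Dne := ⟨⟨a₀, ha₀D0⟩⟩
      dom := fun _ => Set.univ
      domNe := fun _ => ⟨⟨a₀, ha₀D0⟩, Set.mem_univ _⟩
      I := fun w p => {e | ρ w.1 e ∈ M.I (h w.1) p}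
      Isub := fun w p e _ => Set.mem_univ e } with hM'
  -- truth lemma
  have truth : ∀ ψ : Fml, ψ ∈ φ.sub → ∀ (l : List B) (hlen : l.length ≤ m), act l →
      ψ.md + l.length ≤ m → ∀ e : ↥D0set,
      (M'.sat ψ ⟨l, hlen⟩ e ↔ M.sat ψ (h l) (ρ l e)) := by
    intro ψ
    induction ψ with
    | atom p =>
        intro _ l hlen _ _ e
        exact Iff.rfl
    | neg χ ih =>
        intro hmem l hlen hal hmd e
        have hiff := ih (Stmt4.neg_mem_sub hmem) l hlen hal
          (by simpa [Fml.md] using hmd) e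
        show ¬ _ ↔ ¬ _
        rw [hiff]
    | conj χ₁ χ₂ ih₁ ih₂ =>
        intro hmem l hlen hal hmd e
        have hmd1 : χ₁.md + l.length ≤ m := by
          simp only [Fml.md] at hmd; omega
        have hmd2 : χ₂.md + l.length ≤ m := by
          simp only [Fml.md] at hmd; omega
        have hiff1 := ih₁ (Stmt4.conj_mem_sub_left hmem) l hlen hal hmd1 e
        have hiff2 := ih₂ (Stmt4.conj_mem_sub_right hmem) l hlen hal hmd2 e
        show _ ∧ _ ↔ _ ∧ _
        rw [hiff1, hiff2]
    | dia χ ih =>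
        intro hmem l hlen hal hmd e
        have hmdχ : χ.md + 1 + l.length ≤ m := by simpa [Fml.md] using hmd
        constructor
        · rintro ⟨⟨v1, hv1le⟩, ⟨⟨x, hx⟩, hactv⟩, hsatv⟩
          simp only at hx
          subst hx
          have hsχ : M.sat χ (h (x :: l)) (ρ (x :: l) e) :=
            (ih (Stmt4.dia_mem_sub hmem) (x :: l) hv1le hactv (by simp; omega) e).1 hsatv
          have h3 := hactstep l x hactv
          have hdia : M.sat (Fml.dia χ) (h l) (ρ (x :: l) e) := ⟨h (x :: l), h3.1, hsχ⟩
          exact (Stmt4.sat_iff_of_mem_cls (h3.2.2 e) hmem hmd).1 hdia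
        · intro hs
          set x : B := (e, ⟨χ, Stmt4.dia_mem_sub hmem⟩) with hxdef
          have hPx : P l.length (Stmt4.FW init step l) x :=
            ⟨by omega, hs⟩
          have hactx : act (x :: l) := ⟨hal, hPx⟩
          have hlenx : (x :: l).length ≤ m := by simp; omega
          refine ⟨⟨x :: l, hlenx⟩, ⟨⟨x, rfl⟩, hactx⟩, ?_⟩
          exact (ih (Stmt4.dia_mem_sub hmem) (x :: l) hlenx hactx (by simp; omega) e).2
            (hactstep l x hactx).2.1
    | countLe c χ ih =>
        intro hmem l hlen hal hmd e
        have hχ := Stmt4.countLe_mem_sub hmem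
        have hmd' : χ.md + l.length ≤ m := by simpa [Fml.md] using hmd
        have hpt := ih hχ l hlen hal hmd'
        show {b | b ∈ Set.univ ∧ M'.sat χ ⟨l, hlen⟩ b}.encard ≤ (c : ℕ∞) ↔
          {b | b ∈ M.dom (h l) ∧ M.sat χ (h l) b}.encard ≤ (c : ℕ∞)
        have hset : {b | b ∈ Set.univ ∧ M'.sat χ ⟨l, hlen⟩ b} =
            {e' | M.sat χ (h l) (ρ l e')} := by
          ext e'
          simp only [Set.mem_setOf_eq, Set.mem_univ, true_and]
          exact hpt e'
        rw [hset, Stmt4.count_equiv (hactInv l hal) hχ hmd'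
          (Stmt4.c_le_cpt_of_mem_sub hmem), hcd w₀ (h l)]
  -- conclusion
  have hactnil : act ([] : List B) := trivial
  have hroot : M'.sat φ ⟨[], by simp⟩ ⟨a₀, ha₀D0⟩ := by
    rw [truth φ (Stmt4.mem_sub_self φ) [] (by simp) hactnil (by simp [hm]) ⟨a₀, ha₀D0⟩]
    exact hsatφ
  -- finiteness
  haveI : Fintype ↥D0set := Fintype.ofFinite _
  haveI : Fintype {ψ : Fml // ψ ∈ φ.sub} := FinsetCoe.fintype φ.sub
  haveI : Fintype B := by rw [hB]; infer_instance
  haveI : Finite B := inferInstance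
  set emb : M'.W → (Fin m → Option B) := fun w i => w.1[(i : ℕ)]? with hemb
  have hembinj : Function.Injective emb := by
    intro w w' hww
    apply Subtype.ext
    apply List.ext_getElem?
    intro n
    by_cases hn : n < m
    · exact congrFun hww ⟨n, hn⟩
    · rw [List.getElem?_eq_none (w.2.trans (le_of_not_gt hn)),
        List.getElem?_eq_none (w'.2.trans (le_of_not_gt hn))]
  haveI : Fintype (Option B) := inferInstance
  haveI : Finite (Fin m → Option B) := inferInstance
  haveI hWfin : Finite M'.W := Finite.of_injective emb hembinj
  haveI hDfin : Finite M'.D := by rw [hM']; infer_instance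
  -- cardinality bounds
  set L : ℕ := φ.len with hL
  have hL1 : 1 ≤ L := Stmt4.len_pos φ
  have hncard : φ.sub.card ≤ L := Stmt4.card_sub_le_len φ
  have hmL : m ≤ L := Stmt4.md_le_len φ
  have hNd0 : Stmt4.Nd φ 0 ≤ 2 ^ (L + (L + 2) * L) := by
    unfold Stmt4.Nd
    calc (φ.cpt + 1) * (2 ^ (φ.sub.card + 2)) ^ (φ.md - 0)
        ≤ 2 ^ L * (2 ^ (L + 2)) ^ L := by
          apply Nat.mul_le_mul
          · have h0 := Stmt4.cpt_lt_two_pow_len φ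
            rw [← hL] at h0
            omega
          · calc (2 ^ (φ.sub.card + 2)) ^ (φ.md - 0)
                ≤ (2 ^ (L + 2)) ^ (φ.md - 0) :=
                  Nat.pow_le_pow_left (Nat.pow_le_pow_right (by norm_num) (by omega)) _
              _ ≤ (2 ^ (L + 2)) ^ L :=
                  Nat.pow_le_pow_right (Nat.one_le_pow _ _ (by norm_num)) (by omega)
      _ = 2 ^ (L + (L + 2) * L) := by rw [← pow_mul, ← pow_add]
  have hEbound : Nat.card M'.D ≤ 2 ^ (2 * L + (L + 2) * L) := by
    have h1 : Nat.card M'.D = D0set.ncard := Nat.card_coe_set_eq D0set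
    have h2 : D0set.ncard ≤ 2 ^ φ.sub.card * Stmt4.Nd φ 0 :=
      (Set.encard_le_coe_iff_finite_ncard_le.1 hD0card).2
    calc Nat.card M'.D ≤ 2 ^ φ.sub.card * Stmt4.Nd φ 0 := by rw [h1]; exact h2
      _ ≤ 2 ^ L * 2 ^ (L + (L + 2) * L) :=
          Nat.mul_le_mul (Nat.pow_le_pow_right (by norm_num) hncard) hNd0
      _ = 2 ^ (2 * L + (L + 2) * L) := by rw [← pow_add]; congr 1; ring
  have hcardB : Nat.card B + 1 ≤ 2 ^ (3 * L + (L + 2) * L + 1) := by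
    have h1 : Nat.card B = Nat.card M'.D * φ.sub.card := by
      rw [hB, Nat.card_prod]
      congr 1
      rw [Nat.card_eq_fintype_card, Fintype.card_coe]
    have h2 : Nat.card B ≤ 2 ^ (2 * L + (L + 2) * L) * 2 ^ L := by
      rw [h1]
      refine Nat.mul_le_mul hEbound (le_trans hncard (le_of_lt (Nat.lt_two_pow_self (n := L))))
    calc Nat.card B + 1 ≤ 2 ^ (2 * L + (L + 2) * L) * 2 ^ L + 1 := by omega
      _ ≤ 2 ^ (2 * L + (L + 2) * L + L) + 2 ^ (2 * L + (L + 2) * L + L) := by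
          rw [← pow_add]
          have : 1 ≤ 2 ^ (2 * L + (L + 2) * L + L) := Nat.one_le_pow _ _ (by norm_num)
          omega
      _ = 2 ^ (3 * L + (L + 2) * L + 1) := by rw [← two_mul, ← pow_succ']; congr 1; ring
  have hcardW : Nat.card M'.W ≤ 2 ^ ((3 * L + (L + 2) * L + 1) * L) := by
    have h1 : Nat.card M'.W ≤ Nat.card (Fin m → Option B) :=
      Nat.card_le_card_of_injective emb hembinj
    have h2 : Nat.card (Fin m → Option B) = (Nat.card B + 1) ^ m := by
      rw [Nat.card_fun, Finite.card_option]
      congr 1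
      simp [Nat.card_eq_fintype_card]
    calc Nat.card M'.W ≤ (Nat.card B + 1) ^ m := by rw [← h2]; exact h1
      _ ≤ (2 ^ (3 * L + (L + 2) * L + 1)) ^ m := Nat.pow_le_pow_left hcardB m
      _ ≤ (2 ^ (3 * L + (L + 2) * L + 1)) ^ L :=
          Nat.pow_le_pow_right (Nat.one_le_pow _ _ (by norm_num)) hmL
      _ = 2 ^ ((3 * L + (L + 2) * L + 1) * L) := by rw [← pow_mul]
  have hexp : (3 * L + (L + 2) * L + 1) * L ≤ (L + 2) ^ 4 := by
    have e1 : (3 * L + (L + 2) * L + 1) * L = L ^ 3 + 5 * L ^ 2 + L := by ring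
    have e2 : (L + 2) ^ 4 = L ^ 4 + 8 * L ^ 3 + 24 * L ^ 2 + 32 * L + 16 := by ring
    rw [e1, e2]
    linarith [Nat.zero_le (L ^ 4), Nat.zero_le (L ^ 3), Nat.zero_le (L ^ 2), Nat.zero_le L]
  have hexpD : 2 * L + (L + 2) * L ≤ (L + 2) ^ 4 := by
    have e1 : 2 * L + (L + 2) * L = L ^ 2 + 4 * L := by ring
    have e2 : (L + 2) ^ 4 = L ^ 4 + 8 * L ^ 3 + 24 * L ^ 2 + 32 * L + 16 := by ring
    rw [e1, e2]
    linarith [Nat.zero_le (L ^ 4), Nat.zero_le (L ^ 3), Nat.zero_le (L ^ 2), Nat.zero_le L]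
  refine ⟨M', fun u v => rfl, hWfin, hDfin, ?_, ?_,
    ⟨[], by simp⟩, ⟨a₀, ha₀D0⟩, Set.mem_univ _, hroot⟩
  · exact hcardW.trans (Nat.pow_le_pow_right (by norm_num) hexp)
  · exact hEbound.trans (Nat.pow_le_pow_right (by norm_num) hexpD)
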